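/- Assume G is connected, n ≥ 3, and (G;C) is twin free. Then for u ∈ V and i ∈ {1,…,m}, the inequality x_{u,i} ≥ 0 is facet-defining for P if and only if i = m. -/

import Mathlib

open Finset

namespace LegalSeq

variable {V : Type*}

/-- The generalized neighborhood `N⟨v⟩`: the closed neighborhood of `v` if `v ∈ C`,
the open neighborhood otherwise. -/
noncomputable def gN [Fintype V] (G : SimpleGraph V) (C : Set V) (v : V) : Finset V := by
  classical
  exact (Set.toFinite (if v ∈ C then insert v (G.neighborSet v) else G.neighborSet v)).toFinset

/-- The ambient space `ℝ^{V×{1,…,m}} × ℝ^{V×{1,…,m}}` of the polytope of legal sequences. -/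
abbrev Pt (V : Type*) (m : ℕ) := (V × Fin m → ℝ) × (V × Fin m → ℝ)

/-- Feasible 0/1 pairs `(x, y)` of the formulation `F₁` (constraints (1)-(5)). -/
def Feasible [Fintype V] (G : SimpleGraph V) (C : Set V) (m : ℕ) : Set (Pt V m) :=
  { p | (∀ q, p.1 q = 0 ∨ p.1 q = 1) ∧ (∀ q, p.2 q = 0 ∨ p.2 q = 1) ∧
    (∀ i : Fin m, ∑ v : V, p.2 (v, i) ≤ 1) ∧
    (∀ v : V, ∑ i : Fin m, p.2 (v, i) ≤ 1) ∧
    (∀ (v : V) (i : Fin m) (h : i.1 + 1 < m),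
        p.2 (v, ⟨i.1 + 1, h⟩) ≤ ∑ u ∈ gN G C v, (p.1 (u, i) - p.1 (u, ⟨i.1 + 1, h⟩))) ∧
    (∀ (u : V) (i : Fin m), p.1 (u, i) + ∑ v ∈ gN G C u, p.2 (v, i) ≤ 1) ∧
    (∀ (u : V) (i : Fin m) (h : i.1 + 1 < m), p.1 (u, ⟨i.1 + 1, h⟩) ≤ p.1 (u, i)) }

/-- The polytope of legal sequences: the convex hull of the feasible 0/1 pairs. -/
noncomputable def poly [Fintype V] (G : SimpleGraph V) (C : Set V) (m : ℕ) : Set (Pt V m) :=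
  convexHull ℝ (Feasible G C m)

section Aux

open scoped Classical
set_option linter.unusedSectionVars false
set_option linter.deprecated false

variable [Fintype V] {G : SimpleGraph V} {C : Set V} {m : ℕ}

lemma gN_nonempty (hiso : ∀ w : V, w ∉ C → ∃ z, G.Adj w z) (v : V) :
    (gN G C v).Nonempty := by
  classical
  by_cases h : v ∈ C
  · refine ⟨v, ?_⟩
    simp only [gN, Set.Finite.mem_toFinset, if_pos h]
    exact Set.mem_insert _ _
  · obtain ⟨z, hz⟩ := hiso v h
    exact ⟨z, by simp [gN, h, hz]⟩

/-- The feasible point with `x` supported on `{v} × [0,t)` and `y = 0`. -/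
noncomputable def Px (m : ℕ) (v : V) (t : ℕ) : Pt V m :=
  (fun q => if q.1 = v ∧ q.2.1 < t then 1 else 0, 0)

/-- The feasible point with `x` supported on `{w} × [0,j)` and `y` the indicator of `(v,j)`. -/
noncomputable def Ry (m : ℕ) (w v : V) (j : Fin m) : Pt V m :=
  (fun q => if q.1 = w ∧ q.2.1 < j.1 then 1 else 0,
   fun q => if q = (v, j) then 1 else 0)

lemma sum_ind_le_one (s : Finset V) (v : V) (j i : Fin m) :
    ∑ w ∈ s, (if ((w, i) : V × Fin m) = (v, j) then (1:ℝ) else 0) ≤ 1 := by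
  classical
  simp only [Prod.mk.injEq]
  by_cases hij : i = j
  · simp only [hij, and_true]
    rw [Finset.sum_ite_eq' s v (fun _ => (1:ℝ))]
    split <;> norm_num
  · simp [hij]

lemma ite_sub_nonneg {c d : Prop} [Decidable c] [Decidable d] (h : d → c) :
    (0:ℝ) ≤ (if c then 1 else 0) - (if d then 1 else 0) := by
  by_cases hd : d
  · simp [hd, h hd]
  · simp only [hd, if_false, sub_zero]
    split <;> norm_num

lemma ite_le_ite {c d : Prop} [Decidable c] [Decidable d] (h : d → c) :
    (if d then (1:ℝ) else 0) ≤ (if c then 1 else 0) := by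
  by_cases hd : d
  · simp [hd, h hd]
  · by_cases hc : c <;> simp [hd, hc]

lemma Px_feasible (v : V) (t : ℕ) : Px m v t ∈ Feasible G C m := by
  refine ⟨?_, ?_, ?_, ?_, ?_, ?_, ?_⟩
  · intro q; by_cases h : q.1 = v ∧ q.2.1 < t <;> simp [Px, h]
  · intro q; simp [Px]
  · intro i; simp [Px]
  · intro v'; simp [Px]
  · intro v' i h
    have hnn : ∀ w ∈ gN G C v',
        (0:ℝ) ≤ (Px m v t).1 (w, i) - (Px m v t).1 (w, ⟨i.1+1, h⟩) := by
      intro w _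
      simp only [Px]
      exact ite_sub_nonneg (fun hh => ⟨hh.1, Nat.lt_of_succ_lt hh.2⟩)
    have := Finset.sum_nonneg hnn
    simpa [Px] using this
  · intro u' i'
    simp only [Px]
    split <;> norm_num
  · intro u' i' h
    simp only [Px]
    exact ite_le_ite (fun hh => ⟨hh.1, Nat.lt_of_succ_lt hh.2⟩)

lemma Ry_feasible {w v : V} (hw : w ∈ gN G C v) (j : Fin m) :
    Ry m w v j ∈ Feasible G C m := by
  refine ⟨?_, ?_, ?_, ?_, ?_, ?_, ?_⟩
  · intro q
    simp only [Ry]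
    split
    · right; rfl
    · left; rfl
  · intro q; by_cases h : q = (v, j) <;> simp [Ry, h]
  · intro i
    simpa [Ry] using sum_ind_le_one (Finset.univ) v j i
  · intro v'
    simp only [Ry]
    by_cases hv : v' = v
    · subst hv
      calc ∑ i : Fin m, (if ((v', i) : V × Fin m) = (v', j) then (1:ℝ) else 0)
          = ∑ i : Fin m, (if i = j then (1:ℝ) else 0) := by
            apply Finset.sum_congr rfl; intro i _
            simp [Prod.ext_iff]
        _ ≤ 1 := by rw [Finset.sum_ite_eq' Finset.univ j (fun _ => (1:ℝ))]; simp
    · have : ∀ i : Fin m, (if ((v', i) : V × Fin m) = (v, j) then (1:ℝ) else 0) = 0 := by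
        intro i; simp [Prod.ext_iff, hv]
      rw [Finset.sum_congr rfl (fun i _ => this i)]
      simp
  · intro v' i h
    have hnn : ∀ w' ∈ gN G C v',
        (0:ℝ) ≤ (Ry m w v j).1 (w', i) - (Ry m w v j).1 (w', ⟨i.1+1, h⟩) := by
      intro w' _
      simp only [Ry]
      exact ite_sub_nonneg (fun hh => ⟨hh.1, Nat.lt_of_succ_lt hh.2⟩)
    by_cases hc : ((v', (⟨i.1+1, h⟩ : Fin m)) : V × Fin m) = (v, j)
    · have hv : v' = v := (Prod.ext_iff.mp hc).1
      have hj : j.1 = i.1 + 1 := by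
        have := (Prod.ext_iff.mp hc).2
        simpa [Fin.ext_iff] using this.symm
      have hterm : (1:ℝ) ≤ (Ry m w v j).1 (w, i) - (Ry m w v j).1 (w, ⟨i.1+1, h⟩) := by
        simp [Ry, hj]
        exact le_of_eq (if_neg (by intro hh; have := Fin.le_iff_val_le_val.mp hh; simp at this))
      have hwmem : w ∈ gN G C v' := hv ▸ hw
      have := Finset.single_le_sum hnn hwmem
      have hle : (1:ℝ) ≤ ∑ w' ∈ gN G C v',
          ((Ry m w v j).1 (w', i) - (Ry m w v j).1 (w', ⟨i.1+1, h⟩)) :=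
        le_trans hterm this
      calc (Ry m w v j).2 (v', ⟨i.1+1, h⟩) = 1 := by simp [Ry, hc]
        _ ≤ _ := hle
    · calc (Ry m w v j).2 (v', ⟨i.1+1, h⟩) = 0 := by simp [Ry, hc]
        _ ≤ _ := Finset.sum_nonneg hnn
  · intro u' i'
    by_cases hij : i' = j
    · have hx : (Ry m w v j).1 (u', i') = 0 := by simp [Ry, hij]
      rw [hx, zero_add]
      simpa [Ry] using sum_ind_le_one (gN G C u') v j i'
    · have hy : ∀ v' ∈ gN G C u', (Ry m w v j).2 (v', i') = 0 := by
        intro v' _; simp [Ry, Prod.ext_iff, hij]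
      rw [Finset.sum_congr rfl hy]
      simp only [Ry, Finset.sum_const_zero, add_zero]
      split <;> norm_num
  · intro u' i' h
    simp only [Ry]
    exact ite_le_ite (fun hh => ⟨hh.1, Nat.lt_of_succ_lt hh.2⟩)

/-- indicator basis vectors -/
noncomputable def e1 (m : ℕ) (q : V × Fin m) : Pt V m :=
  (fun q' => if q' = q then (1:ℝ) else 0, 0)

noncomputable def e2 (m : ℕ) (q : V × Fin m) : Pt V m :=
  (0, fun q' => if q' = q then (1:ℝ) else 0)

lemma pt_decomp (z : Pt V m) :
    z = ∑ q : V × Fin m, z.1 q • e1 m q + ∑ q : V × Fin m, z.2 q • e2 m q := by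
  classical
  have key : ∀ (g : V × Fin m → ℝ) (q' : V × Fin m),
      ∑ q : V × Fin m, g q * (if q' = q then (1:ℝ) else 0) = g q' := by
    intro g q'
    rw [Finset.sum_congr rfl (fun q _ => by rw [mul_ite, mul_one, mul_zero])]
    rw [Finset.sum_ite_eq Finset.univ q' g]
    simp
  refine Prod.ext ?_ ?_
  · funext q'
    simp only [Prod.fst_add, Prod.fst_sum, Prod.smul_fst, e1, e2, smul_zero,
      Finset.sum_const_zero, add_zero, Pi.add_apply, Finset.sum_apply, Pi.smul_apply,
      smul_eq_mul, Pi.zero_apply]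
    rw [key z.1 q']
  · funext q'
    simp only [Prod.snd_add, Prod.snd_sum, Prod.smul_snd, e1, e2, smul_zero,
      Finset.sum_const_zero, zero_add, Pi.add_apply, Finset.sum_apply, Pi.smul_apply,
      smul_eq_mul, Pi.zero_apply]
    rw [key z.2 q']

lemma e1_eq_sub (v : V) (j : Fin m) : e1 m (v, j) = Px m v (j.1+1) - Px m v j.1 := by
  refine Prod.ext ?_ ?_
  · funext q'
    simp only [e1, Px, Prod.fst_sub, Pi.sub_apply]
    by_cases h1 : q'.1 = v
    · have hq : (q' = (v, j)) ↔ (q'.2.1 = j.1) := by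
        constructor
        · intro h; rw [h]
        · intro h
          have : q'.2 = j := Fin.ext h
          rw [← h1, ← this]
      rw [show (if q' = (v, j) then (1:ℝ) else 0) = (if q'.2.1 = j.1 then 1 else 0) by
        by_cases h : q'.2.1 = j.1 <;> simp [hq, h]]
      simp only [h1, true_and]
      rcases lt_trichotomy q'.2.1 j.1 with h | h | h
      · rw [if_neg (by omega), if_pos (by omega), if_pos h]; norm_num
      · rw [if_pos h, if_pos (by omega), if_neg (by omega)]; norm_num
      · rw [if_neg (by omega), if_neg (by omega), if_neg (by omega)]; norm_num
    · have : ¬(q' = (v, j)) := fun h => h1 (by rw [h])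
      simp [this, h1]
  · funext q'
    simp [e1, Px]

lemma e2_eq_sub (w v : V) (j : Fin m) : e2 m (v, j) = Ry m w v j - Px m w j.1 := by
  refine Prod.ext ?_ ?_
  · funext q'
    simp [e2, Ry, Px]
  · funext q'
    simp [e2, Ry, Px]

/-- coordinate linear functional on the `x` part -/
noncomputable def Xc (m : ℕ) (q : V × Fin m) : Pt V m →ₗ[ℝ] ℝ :=
  (LinearMap.proj q).comp (LinearMap.fst ℝ _ _)

@[simp] lemma Xc_apply (q : V × Fin m) (p : Pt V m) : Xc m q p = p.1 q := rfl

lemma poly_x_nonneg {p : Pt V m} (hp : p ∈ poly G C m) (q : V × Fin m) : 0 ≤ p.1 q := by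
  have hsub : Feasible G C m ⊆ {p : Pt V m | 0 ≤ p.1 q} := by
    intro p hp
    rcases hp.1 q with h | h <;> simp [h]
  have hconv : Convex ℝ {p : Pt V m | 0 ≤ p.1 q} :=
    convex_halfSpace_ge (⟨fun a b => rfl, fun c a => rfl⟩ : IsLinearMap ℝ fun p : Pt V m => p.1 q) 0
  exact convexHull_min hsub hconv hp

lemma poly_x_mono {p : Pt V m} (hp : p ∈ poly G C m) (u : V) (i : Fin m) (h : i.1 + 1 < m) :
    p.1 (u, ⟨i.1+1, h⟩) ≤ p.1 (u, i) := by
  have hsub : Feasible G C m ⊆ {p : Pt V m | p.1 (u, ⟨i.1+1, h⟩) - p.1 (u, i) ≤ 0} := by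
    intro p hp
    have := hp.2.2.2.2.2.2 u i h
    simpa using this
  have hlin : IsLinearMap ℝ fun p : Pt V m => p.1 (u, ⟨i.1+1, h⟩) - p.1 (u, i) :=
    ⟨fun a b => by show (a.1 + b.1) _ - (a.1 + b.1) _ = _; simp [Pi.add_apply]; ring,
     fun c a => by show (c • a.1) _ - (c • a.1) _ = _; simp [Pi.smul_apply]; ring⟩
  have hconv : Convex ℝ {p : Pt V m | p.1 (u, ⟨i.1+1, h⟩) - p.1 (u, i) ≤ 0} :=
    convex_halfSpace_le hlin 0
  have := convexHull_min hsub hconv hp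
  simpa [sub_nonpos] using this

lemma finrank_Pt (m : ℕ) : Module.finrank ℝ (Pt V m) = 2 * Fintype.card V * m := by
  rw [Module.finrank_prod, Module.finrank_pi, Fintype.card_prod, Fintype.card_fin]
  ring

lemma finrank_ker_of_surjective {N : Type*} [AddCommGroup N] [Module ℝ N]
    [FiniteDimensional ℝ N] (f : Pt V m →ₗ[ℝ] N) (hf : Function.Surjective f) :
    Module.finrank ℝ (LinearMap.ker f) =
      2 * Fintype.card V * m - Module.finrank ℝ N := by
  have h := LinearMap.finrank_range_add_finrank_ker f
  rw [LinearMap.range_eq_top.mpr hf, finrank_top, finrank_Pt] at h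
  omega

lemma direction_affineSpan_le {N : Type*} [AddCommGroup N] [Module ℝ N]
    (s : Set (Pt V m)) (f : Pt V m →ₗ[ℝ] N) (hs : ∀ p ∈ s, f p = 0) :
    (affineSpan ℝ s).direction ≤ LinearMap.ker f := by
  rw [direction_affineSpan, vectorSpan_def]
  refine Submodule.span_le.mpr ?_
  intro z hz
  rw [Set.mem_vsub] at hz
  obtain ⟨a, ha, b, hb, rfl⟩ := hz
  simp only [SetLike.mem_coe, LinearMap.mem_ker, vsub_eq_sub, map_sub, hs a ha, hs b hb, sub_zero]

end Aux

/-- `δ(G;C)`, the minimum cardinality of a generalized neighborhood. -/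
noncomputable def gdelta [Fintype V] (G : SimpleGraph V) (C : Set V) : ℕ :=
  sInf (Set.range fun v : V => (gN G C v).card)

/-- The instance `(G;C)` is twin free if distinct vertices have distinct
generalized neighborhoods. -/
def TwinFree [Fintype V] (G : SimpleGraph V) (C : Set V) : Prop :=
  ∀ u v : V, u ≠ v → gN G C u ≠ gN G C v

/-- The inequality `f p ≤ a` is valid for the polytope and the face it defines has affine
dimension `2nm - 1`, i.e. it is facet-defining. -/
def IsFacet [Fintype V] (G : SimpleGraph V) (C : Set V) (m : ℕ)
    (f : Pt V m → ℝ) (a : ℝ) : Prop :=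
  (∀ p ∈ poly G C m, f p ≤ a) ∧
  Module.finrank ℝ ((affineSpan ℝ {p ∈ poly G C m | f p = a}).direction) =
    2 * Fintype.card V * m - 1

/-- For `G` connected, `n ≥ 3`, `(G;C)` twin free: the inequality
`x_{u,i} ≥ 0` (i.e. `−x_{u,i} ≤ 0`) is facet-defining for `P` iff `i = m` (0-based:
`i.1 + 1 = m`). -/
theorem x_nonneg_facet_iff [Fintype V] (G : SimpleGraph V) (C : Set V)
    (hconn : G.Connected) (hcard : 3 ≤ Fintype.card V)
    (hiso : ∀ w : V, w ∉ C → ∃ z, G.Adj w z)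
    (htf : TwinFree G C)
    (m : ℕ) (hm : m = Fintype.card V - gdelta G C + 1)
    (u : V) (i : Fin m) :
    IsFacet G C m (fun p => -(p.1 (u, i))) 0 ↔ i.1 + 1 = m := by
  classical
  constructor
  · rintro ⟨hval, hdim⟩
    by_contra hne
    have hlt : i.1 + 1 < m := Nat.lt_of_le_of_ne (Nat.succ_le_of_lt i.isLt) hne
    set i' : Fin m := ⟨i.1 + 1, hlt⟩ with hi'
    have hi'v : i'.1 = i.1 + 1 := rfl
    set L : Pt V m →ₗ[ℝ] ℝ × ℝ := (Xc m (u, i)).prod (Xc m (u, i')) with hL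
    have hface : ∀ p ∈ {p ∈ poly G C m | -(p.1 (u, i)) = 0}, L p = 0 := by
      intro p hp
      obtain ⟨hp1, hp2⟩ := hp
      have h0 : p.1 (u, i) = 0 := neg_eq_zero.mp hp2
      have h1 : p.1 (u, i') = 0 :=
        le_antisymm (h0 ▸ poly_x_mono hp1 u i hlt) (poly_x_nonneg hp1 _)
      simp [hL, LinearMap.prod_apply, Xc_apply, Prod.ext_iff, h0, h1]
    have hdir := direction_affineSpan_le _ L hface
    have hsurj : Function.Surjective L := by
      rintro ⟨a, b⟩
      have hne' : ((u, i') : V × Fin m) ≠ (u, i) := by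
        intro h
        have h2 : i' = i := (Prod.ext_iff.mp h).2
        have h3 : i'.1 = i.1 := Fin.ext_iff.mp h2
        omega
      refine ⟨((fun q => if q = (u, i) then a else if q = (u, i') then b else 0), 0), ?_⟩
      simp [hL, LinearMap.prod_apply, Xc_apply, hne']
    have hker := finrank_ker_of_surjective L hsurj
    have hrk2 : Module.finrank ℝ (ℝ × ℝ) = 2 := by simp
    have hfin : Module.finrank ℝ
        ((affineSpan ℝ {p ∈ poly G C m | -(p.1 (u, i)) = 0}).direction)
        ≤ 2 * Fintype.card V * m - 2 := by
      have h := Submodule.finrank_mono hdir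
      rw [hker, hrk2] at h
      exact h
    have hdim' : Module.finrank ℝ
        ((affineSpan ℝ {p ∈ poly G C m | -(p.1 (u, i)) = 0}).direction)
        = 2 * Fintype.card V * m - 1 := hdim
    have hm0 : 0 < m := lt_of_le_of_lt (Nat.zero_le _) i.isLt
    have h6 : 6 ≤ 2 * Fintype.card V * m :=
      le_trans (by norm_num) (Nat.mul_le_mul (Nat.mul_le_mul le_rfl hcard) hm0)
    omega
  · intro hi
    refine ⟨?_, ?_⟩
    · intro p hp
      simp only [neg_nonpos]
      exact poly_x_nonneg hp _
    · show Module.finrank ℝ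
        ((affineSpan ℝ {p ∈ poly G C m | -(p.1 (u, i)) = 0}).direction)
        = 2 * Fintype.card V * m - 1
      have hFface : ∀ p ∈ {p ∈ poly G C m | -(p.1 (u, i)) = 0}, Xc m (u, i) p = 0 :=
        fun p hp => neg_eq_zero.mp hp.2
      have hle := direction_affineSpan_le _ (Xc m (u, i)) hFface
      have hmemF : ∀ {a : Pt V m}, a ∈ Feasible G C m → a.1 (u, i) = 0 →
          a ∈ {p ∈ poly G C m | -(p.1 (u, i)) = 0} := by
        intro a ha h0
        exact ⟨subset_convexHull ℝ _ ha, by simp [h0]⟩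
      have hdiff : ∀ a b : Pt V m, a ∈ {p ∈ poly G C m | -(p.1 (u, i)) = 0} →
          b ∈ {p ∈ poly G C m | -(p.1 (u, i)) = 0} →
          a - b ∈ (affineSpan ℝ {p ∈ poly G C m | -(p.1 (u, i)) = 0}).direction := by
        intro a b ha hb
        rw [direction_affineSpan]
        exact vsub_mem_vectorSpan ℝ ha hb
      have hPxF : ∀ (v : V) (t : ℕ), (v ≠ u ∨ t ≤ i.1) →
          Px m v t ∈ {p ∈ poly G C m | -(p.1 (u, i)) = 0} := by
        intro v t hvt
        refine hmemF (Px_feasible v t) ?_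
        simp only [Px]
        rw [if_neg]
        rintro ⟨h1, h2⟩
        rcases hvt with h | h
        · exact h h1.symm
        · omega
      have he1 : ∀ q : V × Fin m, q ≠ (u, i) →
          e1 m q ∈ (affineSpan ℝ {p ∈ poly G C m | -(p.1 (u, i)) = 0}).direction := by
        rintro ⟨v, j⟩ hq
        rw [e1_eq_sub]
        refine hdiff _ _ (hPxF v (j.1 + 1) ?_) (hPxF v j.1 ?_)
        · by_cases hv : v = u
          · right
            subst hv
            have hj : j.1 ≠ i.1 := by
              intro h
              exact hq (by rw [Fin.ext h])
            have := j.isLt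
            omega
          · left; exact hv
        · by_cases hv : v = u
          · right; have := j.isLt; omega
          · left; exact hv
      have he2 : ∀ q : V × Fin m,
          e2 m q ∈ (affineSpan ℝ {p ∈ poly G C m | -(p.1 (u, i)) = 0}).direction := by
        rintro ⟨v, j⟩
        obtain ⟨w, hw⟩ := gN_nonempty hiso v
        rw [e2_eq_sub w]
        refine hdiff _ _ (hmemF (Ry_feasible hw j) ?_) (hPxF w j.1 ?_)
        · simp only [Ry]
          rw [if_neg]
          rintro ⟨-, h2⟩
          have := j.isLt
          omega
        · right; have := j.isLt; omega
      have hge : LinearMap.ker (Xc m (u, i)) ≤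
          (affineSpan ℝ {p ∈ poly G C m | -(p.1 (u, i)) = 0}).direction := by
        intro z hz
        have hz0 : z.1 (u, i) = 0 := LinearMap.mem_ker.mp hz
        rw [pt_decomp z]
        refine Submodule.add_mem _ (Submodule.sum_mem _ ?_) (Submodule.sum_mem _ ?_)
        · intro q _
          by_cases hq : q = (u, i)
          · rw [hq, hz0, zero_smul]; exact Submodule.zero_mem _
          · exact Submodule.smul_mem _ _ (he1 q hq)
        · intro q _
          exact Submodule.smul_mem _ _ (he2 q)
      have heq : (affineSpan ℝ {p ∈ poly G C m | -(p.1 (u, i)) = 0}).direction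
          = LinearMap.ker (Xc m (u, i)) := le_antisymm hle hge
      have hsurj : Function.Surjective (Xc m (u, i)) := by
        intro a
        exact ⟨((fun q => if q = (u, i) then a else 0), 0), by simp⟩
      have hker := finrank_ker_of_surjective (Xc m (u, i)) hsurj
      rw [heq, hker]
      simp

end LegalSeq
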